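/- With kernels k(x,x') = l(x,x') = |x| + |x'| − |x−x'| on ℝ, the biased HSIC estimator (1/n²)Σ_{i,j} k(x_i,x_j) l(y_i,y_j) + (1/n⁴)Σ_{i,j} k(x_i,x_j) Σ_{q,r} l(y_q,y_r) − (2/n³)Σ_{i,j,r} k(x_i,x_j) l(y_i,y_r) equals the distance covariance statistic (1/n²)Σ_{i,j} |x_i−x_j||y_i−y_j| + (1/n²)Σ_{i,j}|x_i−x_j| · (1/n²)Σ_{q,r}|y_q−y_r| − (2/n³)Σ_{i,j,r}|x_i−x_j||y_i−y_r|. -/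

import Mathlib

open Finset

lemma hsic_key (n : ℕ) (a b : Fin n → ℝ) (A B : Fin n → Fin n → ℝ)
    (hA : ∀ i j, A i j = A j i) (hB : ∀ i j, B i j = B j i) :
    (1 / (n : ℝ) ^ 2) * ∑ i, ∑ j, (a i + a j - A i j) * (b i + b j - B i j)
      + (1 / (n : ℝ) ^ 4) * (∑ i, ∑ j, (a i + a j - A i j))
          * (∑ q, ∑ r, (b q + b r - B q r))
      - (2 / (n : ℝ) ^ 3) * ∑ i, ∑ j, ∑ r, (a i + a j - A i j) * (b i + b r - B i r)
    = (1 / (n : ℝ) ^ 2) * ∑ i, ∑ j, A i j * B i j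
      + ((1 / (n : ℝ) ^ 2) * ∑ i, ∑ j, A i j) * ((1 / (n : ℝ) ^ 2) * ∑ q, ∑ r, B q r)
      - (2 / (n : ℝ) ^ 3) * ∑ i, ∑ j, ∑ r, A i j * B i r := by
  rcases Nat.eq_zero_or_pos n with hn | hn
  · subst hn; simp
  have hn' : (n : ℝ) ≠ 0 := by positivity
  set S := ∑ i, a i with hS
  set T := ∑ i, b i with hT
  set C := ∑ i, a i * b i with hC
  set P := ∑ i, ∑ j, A i j with hP
  set Q := ∑ i, ∑ j, B i j with hQ
  set U := ∑ i, ∑ j, a i * B i j with hU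
  set V := ∑ i, ∑ j, A i j * b i with hV
  set W := ∑ i, ∑ j, A i j * B i j with hW
  set Z := ∑ i, ∑ j, ∑ r, A i j * B i r with hZ
  -- double sum atoms
  have s1 : ∑ i : Fin n, ∑ _j : Fin n, a i * b i = n * C := by
    simp [Finset.sum_const, Finset.mul_sum, hC]
  have s2 : ∑ i : Fin n, ∑ j : Fin n, a i * b j = S * T := by
    rw [hS, hT, Finset.sum_mul_sum]
  have s3 : ∑ i : Fin n, ∑ j : Fin n, a j * b i = S * T := by
    rw [Finset.sum_comm, hS, hT, Finset.sum_mul_sum]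
  have s4 : ∑ _i : Fin n, ∑ j : Fin n, a j * b j = n * C := by
    simp [Finset.sum_const, hC]
  have s5 : ∑ i : Fin n, ∑ j : Fin n, a j * B i j = U := by
    rw [Finset.sum_comm, hU]
    exact Finset.sum_congr rfl fun i _ => Finset.sum_congr rfl fun j _ => by rw [hB]
  have s6 : ∑ i : Fin n, ∑ j : Fin n, A i j * b j = V := by
    rw [Finset.sum_comm, hV]
    exact Finset.sum_congr rfl fun i _ => Finset.sum_congr rfl fun j _ => by rw [hA]
  have s7 : ∑ i : Fin n, ∑ _j : Fin n, a i = n * S := by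
    simp [Finset.sum_const, Finset.mul_sum, hS]
  have s8 : ∑ _i : Fin n, ∑ j : Fin n, a j = n * S := by
    simp [Finset.sum_const, hS]
  have s9 : ∑ i : Fin n, ∑ _j : Fin n, b i = n * T := by
    simp [Finset.sum_const, Finset.mul_sum, hT]
  have s10 : ∑ _i : Fin n, ∑ j : Fin n, b j = n * T := by
    simp [Finset.sum_const, hT]
  -- triple sum atoms
  have t1 : ∑ i : Fin n, ∑ _j : Fin n, ∑ _r : Fin n, a i * b i = n ^ 2 * C := by
    simp [Finset.sum_const, Finset.mul_sum, hC]; ring_nf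
  have t2 : ∑ i : Fin n, ∑ _j : Fin n, ∑ r : Fin n, a i * b r = n * S * T := by
    simp only [← Finset.mul_sum, ← hT, Finset.sum_const, Finset.card_fin, nsmul_eq_mul]
    rw [← Finset.sum_mul, ← hS]; ring
  have t3 : ∑ i : Fin n, ∑ _j : Fin n, ∑ r : Fin n, a i * B i r = n * U := by
    simp only [Finset.sum_const, Finset.card_fin, nsmul_eq_mul, ← Finset.mul_sum, hU]
  have t4 : ∑ i : Fin n, ∑ j : Fin n, ∑ _r : Fin n, a j * b i = n * (S * T) := by
    simp only [Finset.sum_const, Finset.card_fin, nsmul_eq_mul, ← Finset.mul_sum, s3]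
  have t5 : ∑ _i : Fin n, ∑ j : Fin n, ∑ r : Fin n, a j * b r = n * (S * T) := by
    rw [show (∑ j : Fin n, ∑ r : Fin n, a j * b r) = S * T from s2]
    simp [Finset.sum_const]
  have t6 : ∑ i : Fin n, ∑ j : Fin n, ∑ r : Fin n, a j * B i r = S * Q := by
    simp only [← Finset.mul_sum, ← Finset.sum_mul, ← hS]
    rw [hQ]
  have t7 : ∑ i : Fin n, ∑ j : Fin n, ∑ _r : Fin n, A i j * b i = n * V := by
    simp only [Finset.sum_const, Finset.card_fin, nsmul_eq_mul, ← Finset.mul_sum, hV]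
  have t8 : ∑ i : Fin n, ∑ j : Fin n, ∑ r : Fin n, A i j * b r = P * T := by
    simp only [← Finset.mul_sum, ← hT, ← Finset.sum_mul, ← hP]
  have h1 : ∑ i, ∑ j, (a i + a j - A i j) * (b i + b j - B i j)
      = 2 * n * C + 2 * (S * T) - 2 * U - 2 * V + W := by
    have e : ∀ i j : Fin n, (a i + a j - A i j) * (b i + b j - B i j)
        = a i * b i + a i * b j + a j * b i + a j * b j
          - a i * B i j - a j * B i j - A i j * b i - A i j * b j + A i j * B i j :=
      fun i j => by ring
    simp only [e, Finset.sum_add_distrib, Finset.sum_sub_distrib]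
    rw [s1, s2, s3, s4, s5, s6, ← hU, ← hV, ← hW]; ring
  have h2a : ∑ i, ∑ j, (a i + a j - A i j) = 2 * n * S - P := by
    simp only [Finset.sum_add_distrib, Finset.sum_sub_distrib]
    rw [s7, s8, ← hP]; ring
  have h2b : ∑ q, ∑ r, (b q + b r - B q r) = 2 * n * T - Q := by
    simp only [Finset.sum_add_distrib, Finset.sum_sub_distrib]
    rw [s9, s10, ← hQ]; ring
  have h3 : ∑ i, ∑ j, ∑ r, (a i + a j - A i j) * (b i + b r - B i r)
      = n ^ 2 * C + 3 * (n * (S * T)) - n * U - S * Q - n * V - P * T + Z := by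
    have e : ∀ i j r : Fin n, (a i + a j - A i j) * (b i + b r - B i r)
        = a i * b i + a i * b r + a j * b i + a j * b r
          - a i * B i r - a j * B i r - A i j * b i - A i j * b r + A i j * B i r :=
      fun i j r => by ring
    simp only [e, Finset.sum_add_distrib, Finset.sum_sub_distrib]
    rw [t1, t2, t3, t4, t5, t6, t7, t8, ← hZ]; ring
  rw [h1, h2a, h2b, h3]
  field_simp
  ring

theorem hsic_eq_dcov (n : ℕ) (x y : Fin n → ℝ) :
    (1 / (n : ℝ) ^ 2) * ∑ i, ∑ j,
        (|x i| + |x j| - |x i - x j|) * (|y i| + |y j| - |y i - y j|)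
      + (1 / (n : ℝ) ^ 4) * (∑ i, ∑ j, (|x i| + |x j| - |x i - x j|))
          * (∑ q, ∑ r, (|y q| + |y r| - |y q - y r|))
      - (2 / (n : ℝ) ^ 3) * ∑ i, ∑ j, ∑ r,
          (|x i| + |x j| - |x i - x j|) * (|y i| + |y r| - |y i - y r|)
    = (1 / (n : ℝ) ^ 2) * ∑ i, ∑ j, |x i - x j| * |y i - y j|
      + ((1 / (n : ℝ) ^ 2) * ∑ i, ∑ j, |x i - x j|)
          * ((1 / (n : ℝ) ^ 2) * ∑ q, ∑ r, |y q - y r|)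
      - (2 / (n : ℝ) ^ 3) * ∑ i, ∑ j, ∑ r, |x i - x j| * |y i - y r| := by
  exact hsic_key n (fun i => |x i|) (fun i => |y i|)
    (fun i j => |x i - x j|) (fun i j => |y i - y j|)
    (fun i j => abs_sub_comm _ _) (fun i j => abs_sub_comm _ _)
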